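/- Let R be a commutative ring, A a commutative R-algebra, and I ⊆ A an ideal such that the quotient R-algebra A/I is formally smooth over R. Then there exists an R-algebra homomorphism s: A/I → lim_n A/I^n into the I-adic completion of A such that the composition of s with the canonical projection lim_n A/I^n → A/I is the identity of A/I; i.e. the canonical surjection from the I-adic completion onto A/I admits an R-algebra section. -/

import Mathlib

universe u

section Aux

variable (R : Type u) {A : Type u} [CommRing R] [CommRing A] [Algebra R A] (I : Ideal A)
  [Algebra.FormallySmooth R (A ⧸ I)]

theorem auxNilFS (n : ℕ) :
    IsNilpotent ((I ^ (n + 1)).map (Ideal.Quotient.mkₐ R (I ^ (n + 2)))) := by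
  refine ⟨2, ?_⟩
  rw [pow_two, ← Ideal.map_mul, ← pow_add]
  have h1 : I ^ (n + 1 + (n + 1)) ≤ I ^ (n + 2) := Ideal.pow_le_pow_right (by omega)
  have h2 : Ideal.map (Ideal.Quotient.mkₐ R (I ^ (n + 2))) (I ^ (n + 2)) = ⊥ :=
    Ideal.map_quotient_self _
  exact eq_bot_iff.mpr (h2 ▸ Ideal.map_mono h1)

noncomputable def towerAuxFS : (n : ℕ) → ((A ⧸ I) →ₐ[R] A ⧸ I ^ (n + 1))
  | 0 => (Ideal.quotientEquivAlgOfEq R (pow_one I).symm).toAlgHom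
  | n + 1 =>
    Algebra.FormallySmooth.lift
      ((I ^ (n + 1)).map (Ideal.Quotient.mkₐ R (I ^ (n + 2))))
      (auxNilFS R I n)
      ((DoubleQuot.quotQuotEquivQuotOfLEₐ R
          (Ideal.pow_le_pow_right (Nat.le_succ (n + 1)))).symm.toAlgHom.comp (towerAuxFS n))

theorem towerAuxFS_step (n : ℕ) (x : A ⧸ I) :
    Ideal.Quotient.factor (S := I ^ (n + 2)) (T := I ^ (n + 1))
      (Ideal.pow_le_pow_right (Nat.le_succ (n + 1))) (towerAuxFS R I (n + 1) x) =
    towerAuxFS R I n x := by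
  have h := Algebra.FormallySmooth.mk_lift
      ((I ^ (n + 1)).map (Ideal.Quotient.mkₐ R (I ^ (n + 2))))
      (auxNilFS R I n)
      ((DoubleQuot.quotQuotEquivQuotOfLEₐ R
          (Ideal.pow_le_pow_right (Nat.le_succ (n + 1)))).symm.toAlgHom.comp (towerAuxFS R I n)) x
  have h2 := congrArg (DoubleQuot.quotQuotEquivQuotOfLEₐ R
      (Ideal.pow_le_pow_right (Nat.le_succ (n + 1)))) h
  rw [show towerAuxFS R I (n + 1) = Algebra.FormallySmooth.lift _ (auxNilFS R I n) _ from rfl]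
  obtain ⟨a, ha⟩ := Ideal.Quotient.mk_surjective
    (Algebra.FormallySmooth.lift _ (auxNilFS R I n)
      ((DoubleQuot.quotQuotEquivQuotOfLEₐ R
          (Ideal.pow_le_pow_right (Nat.le_succ (n + 1)))).symm.toAlgHom.comp (towerAuxFS R I n)) x)
  rw [← ha] at h2 ⊢
  simp only [AlgHom.coe_comp, AlgEquiv.toAlgHom_eq_coe, AlgHom.coe_coe, Function.comp_apply,
    AlgEquiv.coe_algHom, AlgEquiv.apply_symm_apply] at h2
  rw [← h2]
  rw [Ideal.Quotient.factor_mk]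
  rfl

end Aux

theorem towerAuxFS_compat (R : Type u) {A : Type u} [CommRing R] [CommRing A] [Algebra R A]
    (I : Ideal A) [Algebra.FormallySmooth R (A ⧸ I)] :
    ∀ (n m : ℕ) (h : m ≤ n) (x : A ⧸ I),
      Ideal.Quotient.factor (S := I ^ (n + 1)) (T := I ^ (m + 1))
        (Ideal.pow_le_pow_right (by omega)) (towerAuxFS R I n x) = towerAuxFS R I m x := by
  intro n
  induction n with
  | zero => intro m h x; interval_cases m
            obtain ⟨a, ha⟩ := Ideal.Quotient.mk_surjective (towerAuxFS R I 0 x)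
            rw [← ha, Ideal.Quotient.factor_mk]
  | succ n ih =>
    intro m h x
    rcases Nat.eq_or_lt_of_le h with rfl | h'
    · obtain ⟨a, ha⟩ := Ideal.Quotient.mk_surjective (towerAuxFS R I (n + 1) x)
      rw [← ha, Ideal.Quotient.factor_mk]
    · have hm : m ≤ n := by omega
      have := towerAuxFS_step R I n x
      rw [← ih m hm x, ← this]
      obtain ⟨a, ha⟩ := Ideal.Quotient.mk_surjective (towerAuxFS R I (n + 1) x)
      rw [← ha]
      simp [Ideal.Quotient.factor_mk]

theorem towerAuxFS_self (R : Type u) {A : Type u} [CommRing R] [CommRing A] [Algebra R A]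
    (I : Ideal A) [Algebra.FormallySmooth R (A ⧸ I)] (n : ℕ) (x : A ⧸ I) :
    Ideal.Quotient.factor (S := I ^ (n + 1)) (T := I) (Ideal.pow_le_self (Nat.succ_ne_zero n))
      (towerAuxFS R I n x) = x := by
  have h0 := towerAuxFS_compat R I n 0 (Nat.zero_le n) x
  obtain ⟨a, ha⟩ := Ideal.Quotient.mk_surjective x
  have : towerAuxFS R I 0 x = Ideal.Quotient.mk (I ^ 1) a := by
    rw [← ha]; rfl
  obtain ⟨b, hb⟩ := Ideal.Quotient.mk_surjective (towerAuxFS R I n x)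
  rw [← hb, Ideal.Quotient.factor_mk]
  rw [← hb, Ideal.Quotient.factor_mk, this] at h0
  have hba : Ideal.Quotient.mk I b = Ideal.Quotient.mk I a := by
    have := congrArg (Ideal.Quotient.factor (S := I ^ 1) (T := I) (pow_one I).le) h0
    rwa [Ideal.Quotient.factor_mk, Ideal.Quotient.factor_mk] at this
  rw [← ha]; exact hba


set_option maxHeartbeats 1000000 in
/-- Let `R` be a commutative ring, `A` a commutative `R`-algebra and `I ⊆ A` an ideal
such that `A ⧸ I` is formally smooth over `R`. Then the canonical surjection from the
`I`-adic completion `lim_n A ⧸ Iⁿ` of `A` onto `A ⧸ I` admits an `R`-algebra section: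
there is an `R`-algebra homomorphism `s : A ⧸ I → lim_n A ⧸ Iⁿ` whose composition with
the canonical projection is the identity of `A ⧸ I`. -/
theorem formallySmooth_section_of_adicCompletion
    {R A : Type u} [CommRing R] [CommRing A] [Algebra R A] (I : Ideal A)
    [Algebra.FormallySmooth R (A ⧸ I)] :
    letI : Algebra R (AdicCompletion I A) :=
      ((algebraMap A (AdicCompletion I A)).comp (algebraMap R A)).toAlgebra
    ∃ s : (A ⧸ I) →ₐ[R] AdicCompletion I A,
      ∀ x : A ⧸ I,
        Ideal.Quotient.factor (S := I ^ 1) (T := I) (pow_one I).le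
          (AdicCompletion.evalₐ I 1 (s x)) = x := by
  letI : Algebra R (AdicCompletion I A) :=
    ((algebraMap A (AdicCompletion I A)).comp (algebraMap R A)).toAlgebra
  -- the isomorphisms between the two descriptions of the quotients
  have hpow : ∀ n : ℕ, (I ^ n : Ideal A) = (I ^ n • ⊤ : Ideal A) := fun n => by
    ext x; simp
  let e : ∀ n : ℕ, (A ⧸ (I ^ n : Ideal A)) ≃ₐ[A] (A ⧸ (I ^ n • ⊤ : Ideal A)) := fun n =>
    Ideal.quotientEquivAlgOfEq A (hpow n)
  -- components
  let G : ∀ n : ℕ, (A ⧸ I) → (A ⧸ (I ^ n • ⊤ : Ideal A)) := fun n x =>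
    Nat.casesOn n 0 (fun m => e (m + 1) (towerAuxFS R I m x))
  have hsub : ∀ y z : (A ⧸ (I ^ 0 • ⊤ : Ideal A)), y = z := by
    intro y z
    obtain ⟨a, rfl⟩ := Ideal.Quotient.mk_surjective y
    obtain ⟨b, rfl⟩ := Ideal.Quotient.mk_surjective z
    rw [Ideal.Quotient.eq]
    have : (I ^ 0 • ⊤ : Ideal A) = ⊤ := by simp
    rw [this]; trivial
  have hcompat : ∀ (x : A ⧸ I) {m n : ℕ} (hmn : m ≤ n),
      AdicCompletion.transitionMap I A hmn (G n x) = G m x := by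
    intro x m n hmn
    match m, n with
    | 0, n => exact hsub _ _
    | m + 1, n + 1 =>
      have hmn' : m ≤ n := by omega
      obtain ⟨a, ha⟩ := Ideal.Quotient.mk_surjective (towerAuxFS R I n x)
      have h1 : G (n + 1) x = Ideal.Quotient.mk (I ^ (n + 1) • ⊤ : Ideal A) a := by
        show e (n + 1) (towerAuxFS R I n x) = _
        rw [← ha, Ideal.quotientEquivAlgOfEq_mk]
      have h2 : towerAuxFS R I m x = Ideal.Quotient.mk (I ^ (m + 1)) a := by
        rw [← towerAuxFS_compat R I n m hmn' x, ← ha, Ideal.Quotient.factor_mk]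
      have h3 : G (m + 1) x = Ideal.Quotient.mk (I ^ (m + 1) • ⊤ : Ideal A) a := by
        show e (m + 1) (towerAuxFS R I m x) = _
        rw [h2, Ideal.quotientEquivAlgOfEq_mk]
      rw [h1, h3]
      rfl
  -- the section as an algebra hom
  refine ⟨{ toFun := fun x => ⟨fun n => G n x, fun {m n} hmn => hcompat x hmn⟩
            map_one' := ?_
            map_mul' := ?_
            map_zero' := ?_
            map_add' := ?_
            commutes' := ?_ }, ?_⟩
  · refine Subtype.ext (funext fun n => ?_)
    match n with
    | 0 => exact hsub _ _
    | n + 1 =>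
      show e (n + 1) (towerAuxFS R I n 1) = 1
      rw [map_one, map_one]
  · intro x y
    refine Subtype.ext (funext fun n => ?_)
    match n with
    | 0 => exact hsub _ _
    | n + 1 =>
      show e (n + 1) (towerAuxFS R I n (x * y)) = _
      rw [map_mul, map_mul]
      rfl
  · refine Subtype.ext (funext fun n => ?_)
    match n with
    | 0 => exact hsub _ _
    | n + 1 =>
      show e (n + 1) (towerAuxFS R I n 0) = 0
      rw [map_zero, map_zero]
  · intro x y
    refine Subtype.ext (funext fun n => ?_)
    match n with
    | 0 => exact hsub _ _
    | n + 1 =>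
      show e (n + 1) (towerAuxFS R I n (x + y)) = _
      rw [map_add, map_add]
      rfl
  · intro r
    refine Subtype.ext (funext fun n => ?_)
    have hval : ∀ (a : A) (k : ℕ), (algebraMap A (AdicCompletion I A) a).val k
        = Ideal.Quotient.mk (I ^ k • ⊤ : Ideal A) a := fun a k => rfl
    show G n (algebraMap R (A ⧸ I) r)
        = (algebraMap A (AdicCompletion I A) (algebraMap R A r)).val n
    rw [hval]
    match n with
    | 0 => exact hsub _ _
    | n + 1 =>
      show e (n + 1) (towerAuxFS R I n (algebraMap R (A ⧸ I) r)) = _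
      rw [AlgHom.commutes]
      have h5 : algebraMap R (A ⧸ I ^ (n + 1)) r =
          Ideal.Quotient.mk (I ^ (n + 1)) (algebraMap R A r) := rfl
      rw [h5, Ideal.quotientEquivAlgOfEq_mk]
  · intro x
    have hcomp : ∀ y : A ⧸ (I ^ 1 : Ideal A),
        Ideal.quotientEquivAlgOfEq A (hpow 1).symm (e 1 y) = y := by
      intro y
      obtain ⟨b, rfl⟩ := Ideal.Quotient.mk_surjective y
      rw [show e 1 = Ideal.quotientEquivAlgOfEq A (hpow 1) from rfl,
        Ideal.quotientEquivAlgOfEq_mk, Ideal.quotientEquivAlgOfEq_mk]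
    have hv : (⟨fun n => G n x, fun {m n} hmn => hcompat x hmn⟩ : AdicCompletion I A).val 1
        = e 1 (towerAuxFS R I 0 x) := rfl
    have h1 : AdicCompletion.evalₐ I 1
        (⟨fun n => G n x, fun {m n} hmn => hcompat x hmn⟩ : AdicCompletion I A)
        = Ideal.quotientEquivAlgOfEq A (hpow 1).symm
          ((⟨fun n => G n x, fun {m n} hmn => hcompat x hmn⟩ : AdicCompletion I A).val 1) := rfl
    show Ideal.Quotient.factor (S := I ^ 1) (T := I) (pow_one I).le
        (AdicCompletion.evalₐ I 1
          (⟨fun n => G n x, fun {m n} hmn => hcompat x hmn⟩ : AdicCompletion I A)) = x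
    rw [h1, hv, hcomp]
    exact towerAuxFS_self R I 0 x
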